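/- Fixed point characterization via characteristic functions: if a ℤ₊-valued random variable η̄ with ρ̄ := P(η̄ > 0) satisfies E[e^{ixη̄}] = exp{ρ̄(e^{ix} − 1)} · E[e^{ix(η̄ − 1{η̄>0})}] for all x ∈ ℝ, then E[e^{ixη̄}] = (1−ρ̄)(e^{ix}−1) exp{ρ̄(e^{ix}−1)} / (e^{ix} − exp{ρ̄(e^{ix}−1)}) whenever the denominator is nonzero. -/

import Mathlib

open MeasureTheory Complex

lemma aux_integrable {Ω : Type*} [MeasureSpace Ω] (μ : Measure Ω) [IsProbabilityMeasure μ]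
    (η : Ω → ℕ) (hη : Measurable η) (x : ℝ) :
    Integrable (fun ω => Complex.exp (Complex.I * x * (η ω : ℂ))) μ := by
  have hm : Measurable fun ω => Complex.exp (Complex.I * x * (η ω : ℂ)) := by
    exact Complex.measurable_exp.comp (by fun_prop)
  refine (integrable_const (1:ℝ)).mono' hm.aestronglyMeasurable ?_
  filter_upwards with ω
  have : (Complex.I * x * (η ω : ℂ)).re = 0 := by
    simp [Complex.mul_re]
  simp [Complex.norm_exp, this]

theorem charFun_fixed_point {Ω : Type*} [MeasureSpace Ω]
    (μ : Measure Ω) [IsProbabilityMeasure μ]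
    (η : Ω → ℕ) (hη : Measurable η)
    (ρ : ℝ) (hρ : ρ = (μ {ω | 0 < η ω}).toReal)
    (hfix : ∀ x : ℝ,
      ∫ ω, Complex.exp (Complex.I * x * (η ω : ℂ)) ∂μ
        = Complex.exp ((ρ : ℂ) * (Complex.exp (Complex.I * x) - 1)) *
          ∫ ω, Complex.exp (Complex.I * x * ((η ω : ℂ) - (if 0 < η ω then 1 else 0))) ∂μ) :
    ∀ x : ℝ,
      Complex.exp (Complex.I * x) - Complex.exp ((ρ : ℂ) * (Complex.exp (Complex.I * x) - 1)) ≠ 0 →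
      ∫ ω, Complex.exp (Complex.I * x * (η ω : ℂ)) ∂μ
        = (1 - (ρ : ℂ)) * (Complex.exp (Complex.I * x) - 1) *
            Complex.exp ((ρ : ℂ) * (Complex.exp (Complex.I * x) - 1)) /
          (Complex.exp (Complex.I * x)
            - Complex.exp ((ρ : ℂ) * (Complex.exp (Complex.I * x) - 1))) := by
  intro x hden
  set E : ℂ := Complex.exp (Complex.I * x) with hE
  set G : ℂ := Complex.exp ((ρ : ℂ) * (E - 1)) with hG
  set φ : ℂ := ∫ ω, Complex.exp (Complex.I * x * (η ω : ℂ)) ∂μ with hφ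
  have hs : MeasurableSet {ω | 0 < η ω} := hη (measurableSet_lt measurable_const measurable_id)
  -- pointwise identity
  have hpt : ∀ ω, Complex.exp (Complex.I * x * ((η ω : ℂ) - (if 0 < η ω then 1 else 0)))
      = Complex.exp (-(Complex.I * x)) * Complex.exp (Complex.I * x * (η ω : ℂ))
        + (1 - Complex.exp (-(Complex.I * x))) *
          Set.indicator {ω | 0 < η ω}ᶜ (fun _ => (1:ℂ)) ω := by
    intro ω
    by_cases h : 0 < η ω
    · have : Complex.I * x * ((η ω : ℂ) - 1) = -(Complex.I * x) + Complex.I * x * (η ω : ℂ) := by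
        ring
      simp [h, this, Complex.exp_add]
    · have h0 : η ω = 0 := Nat.eq_zero_of_not_pos h
      simp [h, h0]
  have hint1 := aux_integrable μ η hη x
  have hint2 : Integrable (Set.indicator {ω | 0 < η ω}ᶜ (fun _ => (1:ℂ))) μ :=
    (integrable_const (1:ℂ)).indicator hs.compl
  have hI : ∫ ω, Complex.exp (Complex.I * x * ((η ω : ℂ) - (if 0 < η ω then 1 else 0))) ∂μ
      = Complex.exp (-(Complex.I * x)) * φ
        + (1 - Complex.exp (-(Complex.I * x))) * ((1:ℂ) - (ρ : ℂ)) := by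
    have hcompl : ((μ ({ω | 0 < η ω}ᶜ)).toReal : ℂ) = 1 - (ρ : ℂ) := by
      have h1 : μ ({ω | 0 < η ω}ᶜ) = 1 - μ {ω | 0 < η ω} := by
        rw [measure_compl hs (measure_ne_top μ _), measure_univ]
      have h2 : (μ ({ω | 0 < η ω}ᶜ)).toReal = 1 - ρ := by
        rw [h1, ENNReal.toReal_sub_of_le prob_le_one ENNReal.one_ne_top, hρ,
          ENNReal.toReal_one]
      rw [h2]
      push_cast
      ring
    calc ∫ ω, Complex.exp (Complex.I * x * ((η ω : ℂ) - (if 0 < η ω then 1 else 0))) ∂μ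
        = ∫ ω, (Complex.exp (-(Complex.I * x)) * Complex.exp (Complex.I * x * (η ω : ℂ))
            + (1 - Complex.exp (-(Complex.I * x))) *
              Set.indicator {ω | 0 < η ω}ᶜ (fun _ => (1:ℂ)) ω) ∂μ := by
          exact integral_congr_ae (Filter.Eventually.of_forall hpt)
      _ = Complex.exp (-(Complex.I * x)) * φ
            + (1 - Complex.exp (-(Complex.I * x))) *
              ∫ ω, Set.indicator {ω | 0 < η ω}ᶜ (fun _ => (1:ℂ)) ω ∂μ := by
          rw [integral_add (hint1.const_mul _) (hint2.const_mul _)]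
          simp only [← smul_eq_mul, integral_smul]
          rfl
      _ = _ := by
          rw [integral_indicator_const _ hs.compl]
          simp [hcompl]
          exact Or.inl hcompl
  have hfx := hfix x
  rw [hI] at hfx
  simp only [← hE, ← hG] at hfx
  have hEne : E ≠ 0 := Complex.exp_ne_zero _
  have hinv : Complex.exp (-(Complex.I * x)) = E⁻¹ := by
    rw [hE, ← Complex.exp_neg]
  rw [hinv] at hfx
  -- now hfx : φ = G * (E⁻¹ * φ + (1 - E⁻¹) * (1 - ρ))
  have key : φ * (E - G) = (1 - (ρ:ℂ)) * (E - 1) * G := by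
    linear_combination E * hfx + (G * φ - G * (1 - (ρ:ℂ))) * (inv_mul_cancel₀ hEne)
  rw [eq_div_iff hden]
  exact key
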